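/- Let n be a positive integer, let m be a real number with 0 < m < n, let f : ℝⁿ → [0,∞) be Lebesgue-integrable, and let s > 0. Then the set S = { z ∈ ℝⁿ : limsup_{r→0⁺} (1/rᵐ) ∫_{B_r(z)} f dx > s } has m-dimensional Hausdorff measure zero, i.e. Hᵐ(S) = 0. -/

import Mathlib

open MeasureTheory Metric Filter Topology Set
open scoped ENNReal NNReal

lemma aux_cover {n : ℕ} (m : ℝ) (hm0 : 0 < m)
    (ν : Measure (EuclideanSpace ℝ (Fin n))) [IsFiniteMeasure ν]
    (s' : ℝ) (hs' : 0 < s') (A : Set (EuclideanSpace ℝ (Fin n)))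
    (hA : ∀ z ∈ A, ∀ δ : ℝ, 0 < δ →
      ∃ r : ℝ, 0 < r ∧ r < δ ∧ ENNReal.ofReal (s' * r ^ m) ≤ ν (closedBall z r)) :
    μH[m] A ≤ ENNReal.ofReal (8 ^ m) * (ENNReal.ofReal s')⁻¹ * ν Set.univ := by
  classical
  have hs0 : ENNReal.ofReal s' ≠ 0 := by
    simp [ENNReal.ofReal_eq_zero, not_le, hs']
  have hstop : ENNReal.ofReal s' ≠ ∞ := ENNReal.ofReal_ne_top
  have key : ∀ k : ℕ, ∃ u : Set (EuclideanSpace ℝ (Fin n) × ℝ),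
      (∀ p ∈ u, 0 < p.2 ∧ p.2 < 1/(k+1) ∧
        ENNReal.ofReal (s' * p.2 ^ m) ≤ ν (closedBall p.1 p.2)) ∧
      u.PairwiseDisjoint (fun p => closedBall p.1 p.2) ∧
      u.Countable ∧
      A ⊆ ⋃ p ∈ u, closedBall p.1 (4 * p.2) := by
    intro k
    have hδ : (0:ℝ) < 1/(k+1) := by positivity
    set t : Set (EuclideanSpace ℝ (Fin n) × ℝ) := {p | p.1 ∈ A ∧ 0 < p.2 ∧ p.2 < 1/(k+1) ∧
      ENNReal.ofReal (s' * p.2 ^ m) ≤ ν (closedBall p.1 p.2)} with ht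
    obtain ⟨u, hut, hdisj, hcov⟩ :=
      Vitali.exists_disjoint_subfamily_covering_enlargement_closedBall t Prod.fst Prod.snd
        (1/(k+1)) (fun p hp => hp.2.2.1.le) 4 (by norm_num)
    refine ⟨u, fun p hp => (hut hp).2, hdisj, ?_, ?_⟩
    · have hcnt : Set.Countable {b : u | 0 < ν (closedBall (b : EuclideanSpace ℝ (Fin n) × ℝ).1 (b : EuclideanSpace ℝ (Fin n) × ℝ).2)} := by
        apply MeasureTheory.Measure.countable_meas_pos_of_disjoint_iUnion
          (As := fun b : u => closedBall (b : EuclideanSpace ℝ (Fin n) × ℝ).1 (b : EuclideanSpace ℝ (Fin n) × ℝ).2)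
          (fun b => measurableSet_closedBall)
        intro i j hij
        exact hdisj i.2 j.2 (fun h => hij (Subtype.ext h))
      have h2 : {b : u | 0 < ν (closedBall (b : EuclideanSpace ℝ (Fin n) × ℝ).1 (b : EuclideanSpace ℝ (Fin n) × ℝ).2)} = Set.univ := by
        ext b
        simp only [Set.mem_setOf_eq, Set.mem_univ, iff_true]
        have hb := hut b.2
        refine lt_of_lt_of_le ?_ hb.2.2.2
        rw [ENNReal.ofReal_pos]
        have h3 : 0 < (b : EuclideanSpace ℝ (Fin n) × ℝ).2 ^ m := Real.rpow_pos_of_pos hb.2.1 m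
        exact mul_pos hs' h3
      rw [h2] at hcnt
      exact Set.countable_coe_iff.mp (Set.countable_univ_iff.mp hcnt)
    · intro z hz
      obtain ⟨r, hr0, hrδ, hrν⟩ := hA z hz _ hδ
      have hp : ((z, r) : EuclideanSpace ℝ (Fin n) × ℝ) ∈ t := ⟨hz, hr0, hrδ, hrν⟩
      obtain ⟨b, hbu, hsub⟩ := hcov _ hp
      exact Set.mem_biUnion hbu (hsub (mem_closedBall_self hr0.le))
  choose u hu1 hu2 hu3 hu4 using key
  haveI : ∀ k, Countable ↥(u k) := fun k => (hu3 k).to_subtype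
  have hdiam : ∀ k, ∀ b : u k,
      EMetric.diam (closedBall (b : EuclideanSpace ℝ (Fin n) × ℝ).1 (4 * (b : EuclideanSpace ℝ (Fin n) × ℝ).2)) ≤
        ENNReal.ofReal (8 * (1/(k+1))) := by
    intro k b
    have hb := hu1 k _ b.2
    have h40 : (0:ℝ) ≤ 4 * (b : EuclideanSpace ℝ (Fin n) × ℝ).2 := by linarith [hb.1]
    calc EMetric.diam (closedBall (b : EuclideanSpace ℝ (Fin n) × ℝ).1 (4 * (b : EuclideanSpace ℝ (Fin n) × ℝ).2))
        ≤ 2 * ENNReal.ofReal (4 * (b : EuclideanSpace ℝ (Fin n) × ℝ).2) := by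
          rw [← Metric.emetric_closedBall h40]
          exact EMetric.diam_closedBall
      _ = ENNReal.ofReal (8 * (b : EuclideanSpace ℝ (Fin n) × ℝ).2) := by
          rw [← ENNReal.ofReal_ofNat 2, ← ENNReal.ofReal_mul (by norm_num)]
          ring_nf
      _ ≤ ENNReal.ofReal (8 * (1/(k+1))) := by
          apply ENNReal.ofReal_le_ofReal
          nlinarith [hb.1, hb.2.1]
  have hmain := MeasureTheory.Measure.hausdorffMeasure_le_liminf_tsum (d := m) (s := A) (l := atTop)
    (r := fun k : ℕ => ENNReal.ofReal (8 * (1/(k+1))))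
    (ι := fun k => ↥(u k))
    ?_ (fun k b => closedBall (b : EuclideanSpace ℝ (Fin n) × ℝ).1 (4 * (b : EuclideanSpace ℝ (Fin n) × ℝ).2)) ?_ ?_
  · refine hmain.trans ?_
    refine Filter.liminf_le_of_frequently_le (Filter.Frequently.of_forall ?_) (by isBoundedDefault)
    intro k
    have hterm : ∀ b : u k,
        EMetric.diam (closedBall (b : EuclideanSpace ℝ (Fin n) × ℝ).1 (4 * (b : EuclideanSpace ℝ (Fin n) × ℝ).2)) ^ m ≤
          ENNReal.ofReal (8 ^ m) * (ENNReal.ofReal s')⁻¹ *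
            ν (closedBall (b : EuclideanSpace ℝ (Fin n) × ℝ).1 (b : EuclideanSpace ℝ (Fin n) × ℝ).2) := by
      intro b
      have hb := hu1 k _ b.2
      have hb2 : (0:ℝ) < (b : EuclideanSpace ℝ (Fin n) × ℝ).2 := hb.1
      calc EMetric.diam (closedBall (b : EuclideanSpace ℝ (Fin n) × ℝ).1 (4 * (b : EuclideanSpace ℝ (Fin n) × ℝ).2)) ^ m
          ≤ ENNReal.ofReal (8 * (b : EuclideanSpace ℝ (Fin n) × ℝ).2) ^ m := by
            apply ENNReal.rpow_le_rpow _ hm0.le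
            have h40 : (0:ℝ) ≤ 4 * (b : EuclideanSpace ℝ (Fin n) × ℝ).2 := by linarith [hb.1]
            rw [← Metric.emetric_closedBall h40]
            refine EMetric.diam_closedBall.trans_eq ?_
            rw [← ENNReal.ofReal_ofNat 2, ← ENNReal.ofReal_mul (by norm_num)]
            ring_nf
        _ = ENNReal.ofReal ((8 * (b : EuclideanSpace ℝ (Fin n) × ℝ).2) ^ m) := by
            rw [← ENNReal.ofReal_rpow_of_pos (by positivity)]
        _ = ENNReal.ofReal (8 ^ m) * ENNReal.ofReal ((b : EuclideanSpace ℝ (Fin n) × ℝ).2 ^ m) := by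
            rw [Real.mul_rpow (by norm_num) hb2.le,
              ENNReal.ofReal_mul (Real.rpow_nonneg (by norm_num) m)]
        _ ≤ ENNReal.ofReal (8 ^ m) *
              ((ENNReal.ofReal s')⁻¹ * ν (closedBall (b : EuclideanSpace ℝ (Fin n) × ℝ).1 (b : EuclideanSpace ℝ (Fin n) × ℝ).2)) := by
            apply mul_le_mul_right
            have h1 : ENNReal.ofReal s' * ENNReal.ofReal ((b : EuclideanSpace ℝ (Fin n) × ℝ).2 ^ m) ≤
                ν (closedBall (b : EuclideanSpace ℝ (Fin n) × ℝ).1 (b : EuclideanSpace ℝ (Fin n) × ℝ).2) := by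
              rw [← ENNReal.ofReal_mul hs'.le]
              exact hb.2.2
            calc ENNReal.ofReal ((b : EuclideanSpace ℝ (Fin n) × ℝ).2 ^ m)
                = (ENNReal.ofReal s')⁻¹ *
                    (ENNReal.ofReal s' * ENNReal.ofReal ((b : EuclideanSpace ℝ (Fin n) × ℝ).2 ^ m)) := by
                  rw [← mul_assoc, ENNReal.inv_mul_cancel hs0 hstop, one_mul]
              _ ≤ _ := mul_le_mul_right h1 _
        _ = _ := by ring
    calc (∑' b : u k, EMetric.diam (closedBall (b : EuclideanSpace ℝ (Fin n) × ℝ).1 (4 * (b : EuclideanSpace ℝ (Fin n) × ℝ).2)) ^ m)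
        ≤ ∑' b : u k, ENNReal.ofReal (8 ^ m) * (ENNReal.ofReal s')⁻¹ *
            ν (closedBall (b : EuclideanSpace ℝ (Fin n) × ℝ).1 (b : EuclideanSpace ℝ (Fin n) × ℝ).2) := ENNReal.tsum_le_tsum hterm
      _ = ENNReal.ofReal (8 ^ m) * (ENNReal.ofReal s')⁻¹ *
            ∑' b : u k, ν (closedBall (b : EuclideanSpace ℝ (Fin n) × ℝ).1 (b : EuclideanSpace ℝ (Fin n) × ℝ).2) := ENNReal.tsum_mul_left
      _ ≤ ENNReal.ofReal (8 ^ m) * (ENNReal.ofReal s')⁻¹ * ν Set.univ := by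
        apply mul_le_mul_right
        rw [← measure_biUnion (hu3 k) (hu2 k) (fun p _ => measurableSet_closedBall)]
        exact measure_mono (Set.subset_univ _)
  · rw [show (0:ℝ≥0∞) = ENNReal.ofReal (8 * 0) by simp]
    apply ENNReal.tendsto_ofReal
    exact tendsto_const_nhds.mul tendsto_one_div_add_atTop_nhds_zero_nat
  · exact Filter.Eventually.of_forall fun k => hdiam k
  · apply Filter.Eventually.of_forall
    intro k
    have h := hu4 k
    rwa [Set.biUnion_eq_iUnion] at h

/-- For `0 < m < n`, integrable nonnegative `f : ℝⁿ → [0,∞)` and `s > 0`,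
the set of points where `limsup_{r→0⁺} r^{-m} ∫_{B_r(z)} f > s` has `Hᵐ`-measure zero. -/
theorem stmt_1 (n : ℕ) (hn : 0 < n) (m : ℝ) (hm0 : 0 < m) (hmn : m < n)
    (f : EuclideanSpace ℝ (Fin n) → ℝ)
    (hf_nonneg : ∀ x, 0 ≤ f x) (hf_int : Integrable f)
    (s : ℝ) (hs : 0 < s) :
    μH[m] {z : EuclideanSpace ℝ (Fin n) |
        ENNReal.ofReal s <
          Filter.limsup
            (fun r : ℝ => ENNReal.ofReal ((1 / r ^ m) * ∫ x in ball z r, f x))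
            (𝓝[>] 0)} = 0 := by
  classical
  set S := {z : EuclideanSpace ℝ (Fin n) |
        ENNReal.ofReal s <
          Filter.limsup
            (fun r : ℝ => ENNReal.ofReal ((1 / r ^ m) * ∫ x in ball z r, f x))
            (𝓝[>] 0)} with hSdef
  haveI : Nontrivial (EuclideanSpace ℝ (Fin n)) := by
    apply Module.nontrivial_of_finrank_pos (R := ℝ)
    rw [finrank_euclideanSpace_fin]
    exact hn
  set c1 : ℝ := (volume (ball (0 : EuclideanSpace ℝ (Fin n)) 1)).toReal with hc1
  have hc1nn : 0 ≤ c1 := ENNReal.toReal_nonneg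
  have hvol : ∀ (z : EuclideanSpace ℝ (Fin n)) (r : ℝ), 0 ≤ r →
      (volume (ball z r)).toReal = r ^ n * c1 := by
    intro z r hr
    rw [Measure.addHaar_ball (μ := volume) z hr, ENNReal.toReal_mul,
      ENNReal.toReal_ofReal (by positivity), finrank_euclideanSpace_fin]
  set C : ℝ≥0∞ := ENNReal.ofReal (8 ^ m) * (ENNReal.ofReal (s/2))⁻¹ with hCdef
  have hC : C ≠ ∞ :=
    ENNReal.mul_ne_top ENNReal.ofReal_ne_top
      (by simp [ENNReal.inv_ne_top, ENNReal.ofReal_eq_zero, not_le, half_pos hs])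
  have hbound : ∀ M : ℕ,
      μH[m] S ≤ C * ENNReal.ofReal (∫ x, (f x - min (f x) (M:ℝ))) := by
    intro M
    set g : EuclideanSpace ℝ (Fin n) → ℝ := fun x => f x - min (f x) (M:ℝ) with hgdef
    have hmin_nonneg : ∀ x, 0 ≤ min (f x) (M:ℝ) :=
      fun x => le_min (hf_nonneg x) (Nat.cast_nonneg M)
    have hmin_int : Integrable (fun x => min (f x) (M:ℝ)) := by
      apply Integrable.mono hf_int
        ((hf_int.aemeasurable.min aemeasurable_const).aestronglyMeasurable)
      apply ae_of_all
      intro a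
      rw [Real.norm_eq_abs, Real.norm_eq_abs, abs_of_nonneg (hmin_nonneg a),
        abs_of_nonneg (hf_nonneg a)]
      exact min_le_left _ _
    have hg_int : Integrable g := hf_int.sub hmin_int
    have hg_nonneg : ∀ x, 0 ≤ g x := fun x => sub_nonneg.2 (min_le_left _ _)
    set ν : Measure (EuclideanSpace ℝ (Fin n)) :=
      volume.withDensity (fun x => ENNReal.ofReal (g x)) with hνdef
    have h1 : ENNReal.ofReal (∫ x, g x) = ∫⁻ x, ENNReal.ofReal (g x) :=
      ofReal_integral_eq_lintegral_ofReal hg_int (ae_of_all _ hg_nonneg)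
    haveI : IsFiniteMeasure ν := by
      apply isFiniteMeasure_withDensity
      rw [← h1]
      exact ENNReal.ofReal_ne_top
    have hν_univ : ν Set.univ = ENNReal.ofReal (∫ x, g x) := by
      rw [hνdef, withDensity_apply _ MeasurableSet.univ, Measure.restrict_univ, h1]
    -- tendsto of the bounded part
    have hpos : 0 < (n:ℝ) - m := by
      have : (0:ℝ) < n := by exact_mod_cast hn
      linarith
    have T : Tendsto (fun r : ℝ => ((M:ℝ) * c1) * r ^ ((n:ℝ) - m)) (𝓝[>] (0:ℝ)) (𝓝 0) := by
      have hc := (Real.continuousAt_rpow_const 0 ((n:ℝ) - m) (Or.inr hpos.le)).tendsto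
      rw [Real.zero_rpow hpos.ne'] at hc
      have h2 : Tendsto (fun r : ℝ => ((M:ℝ) * c1) * r ^ ((n:ℝ) - m)) (𝓝[>] (0:ℝ))
          (𝓝 (((M:ℝ) * c1) * 0)) :=
        Tendsto.const_mul _ (hc.mono_left nhdsWithin_le_nhds)
      simpa using h2
    have hA : ∀ z ∈ S, ∀ δ : ℝ, 0 < δ →
        ∃ r : ℝ, 0 < r ∧ r < δ ∧ ENNReal.ofReal ((s/2) * r ^ m) ≤ ν (closedBall z r) := by
      intro z hz δ hδ
      rw [hSdef, Set.mem_setOf_eq] at hz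
      have freq := Filter.frequently_lt_of_lt_limsup (by isBoundedDefault) hz
      have ev2 : ∀ᶠ r in 𝓝[>] (0:ℝ), ((M:ℝ) * c1) * r ^ ((n:ℝ) - m) < s/2 :=
        T.eventually_lt_const (half_pos hs)
      have ev3 : ∀ᶠ r in 𝓝[>] (0:ℝ), r ∈ Set.Ioo (0:ℝ) δ :=
        Filter.eventually_of_mem (Ioo_mem_nhdsGT_of_mem ⟨le_rfl, hδ⟩) (fun y hy => hy)
      obtain ⟨r, hr1, hr2, hr3⟩ := (freq.and_eventually (ev2.and ev3)).exists
      have hr0 : 0 < r := hr3.1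
      refine ⟨r, hr0, hr3.2, ?_⟩
      have hrm : 0 < r ^ m := Real.rpow_pos_of_pos hr0 m
      have hs1 : s < (1 / r ^ m) * ∫ x in ball z r, f x :=
        (ENNReal.ofReal_lt_ofReal_iff_of_nonneg hs.le).1 hr1
      have hsplit : ∫ x in ball z r, f x =
          (∫ x in ball z r, min (f x) (M:ℝ)) + ∫ x in ball z r, g x := by
        rw [← integral_add hmin_int.integrableOn hg_int.integrableOn]
        apply integral_congr_ae
        apply ae_of_all
        intro x
        simp [hgdef]
      -- bound the min part
      have hIle : ∫ x in ball z r, min (f x) (M:ℝ) ≤ (M:ℝ) * (r ^ n * c1) := by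
        calc ∫ x in ball z r, min (f x) (M:ℝ)
            ≤ ∫ _x in ball z r, (M:ℝ) := by
              apply setIntegral_mono hmin_int.integrableOn
                (integrableOn_const measure_ball_lt_top.ne)
              intro x
              exact min_le_right _ _
          _ = (volume (ball z r)).toReal * (M:ℝ) := by
              rw [setIntegral_const, smul_eq_mul, measureReal_def]
          _ = (M:ℝ) * (r ^ n * c1) := by rw [hvol z r hr0.le]; ring
      have hminpart : (1 / r ^ m) * ∫ x in ball z r, min (f x) (M:ℝ) ≤
          ((M:ℝ) * c1) * r ^ ((n:ℝ) - m) := by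
        have h2 : r ^ ((n:ℝ) - m) = r ^ n / r ^ m := by
          rw [Real.rpow_sub hr0, Real.rpow_natCast]
        rw [h2]
        calc (1 / r ^ m) * ∫ x in ball z r, min (f x) (M:ℝ)
            ≤ (1 / r ^ m) * ((M:ℝ) * (r ^ n * c1)) := by
              apply mul_le_mul_of_nonneg_left hIle (by positivity)
          _ = (M:ℝ) * c1 * (r ^ n / r ^ m) := by ring
      have hgt : s/2 < (1 / r ^ m) * ∫ x in ball z r, g x := by
        have h5 := hr2
        rw [hsplit, mul_add] at hs1
        linarith
      have hlt : (s/2) * r ^ m < ∫ x in ball z r, g x := by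
        have h3 := mul_lt_mul_of_pos_right hgt hrm
        have h4 : ((1 / r ^ m) * ∫ x in ball z r, g x) * r ^ m = ∫ x in ball z r, g x := by
          field_simp
        linarith [h3, h4.le, h4.ge]
      have hmono : ∫ x in ball z r, g x ≤ ∫ x in closedBall z r, g x := by
        apply setIntegral_mono_set hg_int.integrableOn (ae_of_all _ hg_nonneg)
        exact HasSubset.Subset.eventuallyLE ball_subset_closedBall
      have hν : ν (closedBall z r) = ENNReal.ofReal (∫ x in closedBall z r, g x) := by
        rw [hνdef, withDensity_apply _ measurableSet_closedBall,
          ← ofReal_integral_eq_lintegral_ofReal hg_int.integrableOn (ae_of_all _ hg_nonneg)]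
      rw [hν]
      exact ENNReal.ofReal_le_ofReal (le_of_lt (lt_of_lt_of_le hlt hmono))
    have := aux_cover m hm0 ν (s/2) (half_pos hs) S hA
    rw [hν_univ] at this
    calc μH[m] S ≤ ENNReal.ofReal (8 ^ m) * (ENNReal.ofReal (s/2))⁻¹ *
        ENNReal.ofReal (∫ x, g x) := this
      _ = C * ENNReal.ofReal (∫ x, (f x - min (f x) (M:ℝ))) := by rw [hCdef]
  -- dominated convergence
  have hlim : Tendsto (fun M : ℕ => ∫ x, (f x - min (f x) (M:ℝ))) atTop (𝓝 0) := by
    have h0 : Tendsto (fun M : ℕ => ∫ x, (f x - min (f x) (M:ℝ))) atTop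
        (𝓝 (∫ _x : EuclideanSpace ℝ (Fin n), (0:ℝ))) := by
      apply tendsto_integral_of_dominated_convergence (F := fun (M : ℕ) x => f x - min (f x) (M:ℝ)) f
        (fun M => ((hf_int.sub (hf_int.mono
          ((hf_int.aemeasurable.min aemeasurable_const).aestronglyMeasurable)
          (ae_of_all _ fun a => by
            rw [Real.norm_eq_abs, Real.norm_eq_abs,
              abs_of_nonneg (le_min (hf_nonneg a) (Nat.cast_nonneg M)),
              abs_of_nonneg (hf_nonneg a)]
            exact min_le_left _ _))).aestronglyMeasurable)) hf_int
      · intro M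
        apply ae_of_all
        intro a
        have h1 : 0 ≤ min (f a) (M:ℝ) := le_min (hf_nonneg a) (Nat.cast_nonneg M)
        have h2 : 0 ≤ f a - min (f a) (M:ℝ) := sub_nonneg.2 (min_le_left _ _)
        rw [Real.norm_eq_abs, abs_of_nonneg h2]
        linarith
      · apply ae_of_all
        intro a
        have hev : ∀ᶠ M : ℕ in atTop, (0:ℝ) = f a - min (f a) (M:ℝ) := by
          filter_upwards [eventually_ge_atTop ⌈f a⌉₊] with M hM
          have hle : f a ≤ (M:ℝ) := (Nat.le_ceil _).trans (by exact_mod_cast hM)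
          rw [min_eq_left hle, sub_self]
        exact tendsto_const_nhds.congr' hev
    simpa using h0
  have hten : Tendsto (fun M : ℕ => C * ENNReal.ofReal (∫ x, (f x - min (f x) (M:ℝ))))
      atTop (𝓝 0) := by
    have h0 : Tendsto (fun M : ℕ => ENNReal.ofReal (∫ x, (f x - min (f x) (M:ℝ))))
        atTop (𝓝 (ENNReal.ofReal 0)) := ENNReal.tendsto_ofReal hlim
    have h2 := ENNReal.Tendsto.const_mul h0 (Or.inr hC)
    simpa using h2
  have hfin : μH[m] S ≤ 0 := ge_of_tendsto hten (Filter.Eventually.of_forall hbound)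
  exact nonpos_iff_eq_zero.mp hfin
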